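/- If τ is cohomologous to a constant, i.e. τ(x) = φ(E(x)) − φ(x) + c for some φ ∈ C^r(S¹) and c ∈ ℝ, then 𝔫(τ) = ℓ. -/

import Mathlib

noncomputable section

open Filter Set Topology MeasureTheory

/-- The circle `ℝ/ℤ`. -/
abbrev 𝕊 : Type := UnitAddCircle

/-- The canonical representative in `[0,1)` of a point of the circle. -/
def rep (x : 𝕊) : ℝ := (AddCircle.equivIco 1 0 x : ℝ)

/-- A `C^r` expanding map of the circle of degree `ℓ`, presented by a lift `ℝ → ℝ`,
together with the expansion constants `1 < λ ≤ Λ` bounding its derivative. -/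
structure ExpMap (r : ℕ) (ℓ : ℕ) : Type where
  toFun : ℝ → ℝ
  contDiff : ContDiff ℝ r toFun
  degree : ∀ x : ℝ, toFun (x + 1) = toFun x + ℓ
  lam : ℝ
  Lam : ℝ
  one_lt_lam : 1 < lam
  lam_le_Lam : lam ≤ Lam
  lam_le_deriv : ∀ x : ℝ, lam ≤ deriv toFun x
  deriv_le_Lam : ∀ x : ℝ, deriv toFun x ≤ Lam

/-- A real-valued `C^s` function on the circle, presented by a `1`-periodic lift. -/
structure CrFun (s : ℕ∞) : Type where
  toFun : ℝ → ℝ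
  contDiff : ContDiff ℝ s toFun
  periodic : ∀ x : ℝ, toFun (x + 1) = toFun x

variable {r ℓ : ℕ}

/-- The induced map on the circle. -/
def ExpMap.map (E : ExpMap r ℓ) : 𝕊 → 𝕊 := fun x => ((E.toFun (rep x) : ℝ) : 𝕊)

/-- `(E^n)'(x)`, the derivative of the `n`-th iterate at a circle point. -/
def ExpMap.derivn (E : ExpMap r ℓ) (n : ℕ) (x : 𝕊) : ℝ := deriv (E.toFun^[n]) (rep x)

/-- `‖τ'‖_∞`, the sup-norm of the derivative of `τ`. -/
def CrFun.dsup {s : ℕ∞} (τ : CrFun s) : ℝ :=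
  sSup ((fun x => |deriv τ.toFun x|) '' Set.Icc (0:ℝ) 1)

/-- The skew product `f = f_{E,τ} : 𝕋² → 𝕋²`, `f(x,s) = (E x, s + τ x)`. -/
def skew (E : ExpMap r ℓ) {s : ℕ∞} (τ : CrFun s) : 𝕊 × 𝕊 → 𝕊 × 𝕊 :=
  fun z => (E.map z.1, z.2 + ((τ.toFun (rep z.1) : ℝ) : 𝕊))

/-- The Jacobian matrix `Df(z)`, depending only on the base coordinate. -/
def Jac1 (E : ExpMap r ℓ) {s : ℕ∞} (τ : CrFun s) (x : 𝕊) : Matrix (Fin 2) (Fin 2) ℝ :=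
  !![deriv E.toFun (rep x), 0; deriv τ.toFun (rep x), 1]

/-- The Jacobian matrix `Df^n(z)` of the `n`-th iterate. -/
def Jacn (E : ExpMap r ℓ) {s : ℕ∞} (τ : CrFun s) : ℕ → 𝕊 × 𝕊 → Matrix (Fin 2) (Fin 2) ℝ
  | 0, _ => 1
  | n+1, z => Jacn E τ n (skew E τ z) * Jac1 E τ z.1

/-- `Df^n` as a function of the base point only. -/
def JacnB (E : ExpMap r ℓ) {s : ℕ∞} (τ : CrFun s) (n : ℕ) (x : 𝕊) : Matrix (Fin 2) (Fin 2) ℝ :=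
  Jacn E τ n (x, (0 : 𝕊))

/-- The cone `K_R = {(ξ,η) : |η| ≤ ϑ_R |ξ|}` with `ϑ_R = R/(λ-1)`. -/
def ExpMap.cone (E : ExpMap r ℓ) (R : ℝ) : Set (Fin 2 → ℝ) :=
  {v | |v 1| ≤ R / (E.lam - 1) * |v 0|}

/-- A unit vector of `ℝ²`. -/
def IsUnitVec (v : Fin 2 → ℝ) : Prop := v 0 ^ 2 + v 1 ^ 2 = 1

/-- `𝔫(τ,R;n) = sup_z sup_v #{ζ ∈ f^{-n}(z) : v ∈ Df^n(ζ) K_R}`. -/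
def nQ (E : ExpMap r ℓ) {s : ℕ∞} (τ : CrFun s) (R : ℝ) (n : ℕ) : ℝ :=
  sSup {c : ℝ | ∃ (z : 𝕊 × 𝕊) (v : Fin 2 → ℝ), IsUnitVec v ∧
    c = ({ζ : 𝕊 × 𝕊 | (skew E τ)^[n] ζ = z ∧
      v ∈ (Jacn E τ n ζ).mulVec '' E.cone R}.ncard : ℝ)}

/-- `𝔫(τ) = lim_n 𝔫(τ,R;n)^{1/n}` (computed with the choice `R = ‖τ'‖_∞ + 1`). -/
def nlim (E : ExpMap r ℓ) {s : ℕ∞} (τ : CrFun s) : ℝ :=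
  limUnder atTop (fun n : ℕ => nQ E τ (τ.dsup + 1) n ^ ((n : ℝ)⁻¹))

/-- The `C^r` distance between two (lifts of) functions on the circle. -/
def crDist (r : ℕ) (f g : ℝ → ℝ) : ℝ :=
  sSup {c : ℝ | ∃ i ≤ r, ∃ x ∈ Set.Icc (0:ℝ) 1, c = |iteratedDeriv i f x - iteratedDeriv i g x|}

/-- `x_α`: the preimage point of `x` coded by the word `α = (α_n, …, α_1)`,
given the system `g` of inverse branches of `E`; here `α i` is the letter `α_{i+1}`. -/
def codePt (g : Fin ℓ → 𝕊 → 𝕊) : {n : ℕ} → (Fin n → Fin ℓ) → 𝕊 → 𝕊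
  | 0, _, x => x
  | n+1, α, x => g (α (Fin.last n)) (codePt g (fun i : Fin n => α i.castSucc) x)

/-- `[α]_p`, the truncation of a word to length `p`. -/
def trunc {ℓ n : ℕ} (α : Fin n → Fin ℓ) (p : ℕ) (h : p ≤ n) : Fin p → Fin ℓ :=
  fun i => α (Fin.castLE h i)

/-- `S_n(x;α;ψ) = Σ_{k=1}^n ψ'(x_{[α]_k}) / (E^k)'(x_{[α]_k})`. -/
def Ssum (E : ExpMap r ℓ) (g : Fin ℓ → 𝕊 → 𝕊) (ψ : ℝ → ℝ) {n : ℕ}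
    (α : Fin n → Fin ℓ) (x : 𝕊) : ℝ :=
  ∑ k : Fin n, deriv ψ (rep (codePt g (trunc α (k.1+1) k.isLt) x)) /
    E.derivn (k.1+1) (codePt g (trunc α (k.1+1) k.isLt) x)

/-- `S(x;ω) = Σ_{k=1}^∞ τ'(x_{[ω]_k}) / (E^k)'(x_{[ω]_k})` for an infinite word `ω`. -/
def Sinf (E : ExpMap r ℓ) (g : Fin ℓ → 𝕊 → 𝕊) (ψ : ℝ → ℝ) (y : 𝕊) (ω : ℕ → Fin ℓ) : ℝ :=
  ∑' k : ℕ, deriv ψ (rep (codePt g (fun i : Fin (k+1) => ω i) y)) /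
    E.derivn (k+1) (codePt g (fun i : Fin (k+1) => ω i) y)

/-- Faure's counting function `Ñ_{R̃}(n)`. -/
def Ntilde (E : ExpMap r ℓ) (g : Fin ℓ → 𝕊 → 𝕊) {s : ℕ∞} (τ : CrFun s) (Rt : ℝ) (n : ℕ) : ℝ :=
  sSup {c : ℝ | ∃ (y : 𝕊) (η : ℝ),
    c = ({α : Fin n → Fin ℓ | ∃ ω : ℕ → Fin ℓ, (∀ i : Fin n, ω i = α i) ∧
      |η - Sinf E g τ.toFun y ω| ≤ Rt * (E.derivn n (codePt g α y))⁻¹}.ncard : ℝ)}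

/-- `𝐧(τ,R;n)`. -/
def nnQ (E : ExpMap r ℓ) {s : ℕ∞} (τ : CrFun s) (R : ℝ) (n : ℕ) : ℝ :=
  sSup {c : ℝ | ∃ (z : 𝕊 × 𝕊) (v : Fin 2 → ℝ), IsUnitVec v ∧
    c = ∑ᶠ ζ ∈ {ζ : 𝕊 × 𝕊 | (skew E τ)^[n] ζ = z ∧
        v ∈ (Jacn E τ n ζ).mulVec '' E.cone R}, ((Jacn E τ n ζ).det)⁻¹}

/-- `𝐧(τ) = limsup_n 𝐧(τ,R;n)^{1/n}` (with `R = ‖τ'‖_∞ + 1`). -/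
def nnlim (E : ExpMap r ℓ) {s : ℕ∞} (τ : CrFun s) : ℝ :=
  limsup (fun n : ℕ => nnQ E τ (τ.dsup + 1) n ^ ((n : ℝ)⁻¹)) atTop

/-- `𝐦(τ,R;n)`. -/
def mmQ (E : ExpMap r ℓ) {s : ℕ∞} (τ : CrFun s) (R : ℝ) (n : ℕ) : ℝ :=
  sSup {c : ℝ | ∃ (z w : 𝕊 × 𝕊), (skew E τ)^[n] w = z ∧
    c = ∑ᶠ ζ ∈ {ζ : 𝕊 × 𝕊 | (skew E τ)^[n] ζ = z ∧
        ((Jacn E τ n ζ).mulVec '' E.cone R) ∩ ((Jacn E τ n w).mulVec '' E.cone R) = {0}},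
      ((Jacn E τ n ζ).det)⁻¹}

/-- `𝐦(τ) = limsup_n 𝐦(τ,R;n)^{1/n}` (with `R = ‖τ'‖_∞ + 1`). -/
def mmlim (E : ExpMap r ℓ) {s : ℕ∞} (τ : CrFun s) : ℝ :=
  limsup (fun n : ℕ => mmQ E τ (τ.dsup + 1) n ^ ((n : ℝ)⁻¹)) atTop

/-- `χ = lim_n (min_x (E^n)'(x))^{-1/n}`. -/
def chi (E : ExpMap r ℓ) : ℝ :=
  limUnder atTop (fun n : ℕ => (sInf (Set.range (E.derivn n))) ^ (-((n : ℝ)⁻¹)))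

/-- The Gram-determinant Jacobian `Jac(M) = √(det (M Mᵀ))` of a `p × m` matrix,
which equals the modulus of the Jacobian determinant of the restriction of the
associated linear map to the orthogonal complement of its kernel when the map is
surjective, and `0` otherwise. -/
def gramJac {p m : ℕ} (M : Matrix (Fin p) (Fin m) ℝ) : ℝ :=
  Real.sqrt (M * M.transpose).det

/-- The Jacobian of a linear map between Euclidean spaces. -/
def linJac {d e : ℕ} (L : EuclideanSpace ℝ (Fin d) →ₗ[ℝ] EuclideanSpace ℝ (Fin e)) : ℝ :=
  gramJac (LinearMap.toMatrix (EuclideanSpace.basisFun (Fin d) ℝ).toBasis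
    (EuclideanSpace.basisFun (Fin e) ℝ).toBasis L)



lemma rep_mem (x : 𝕊) : rep x ∈ Set.Ico (0:ℝ) 1 := by
  have := (AddCircle.equivIco 1 0 x).2
  simpa [rep] using this

lemma coe_rep (x : 𝕊) : ((rep x : ℝ) : 𝕊) = x := (AddCircle.equivIco 1 0).symm_apply_apply x

lemma exists_int_coe_eq {a b : ℝ} (h : (a : 𝕊) = (b : 𝕊)) : ∃ m : ℤ, b = a + m := by
  have : ((b - a : ℝ) : 𝕊) = 0 := by rw [AddCircle.coe_sub, h, sub_self]
  rw [AddCircle.coe_eq_zero_iff] at this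
  obtain ⟨m, hm⟩ := this
  refine ⟨m, ?_⟩
  have : (m : ℝ) = b - a := by simpa using hm
  linarith

lemma periodic_add_int {f : ℝ → ℝ} (hp : Function.Periodic f 1) (a : ℝ) (m : ℤ) :
    f (a + m) = f a :=
  (by simpa using hp.sub_int_mul_eq (x := a + m) m : f a = f (a+m)).symm

lemma periodic_rep_coe {f : ℝ → ℝ} (hf : ∀ x, f (x+1) = f x) (t : ℝ) :
    f (rep (t : 𝕊)) = f t := by
  obtain ⟨m, hm⟩ := exists_int_coe_eq (coe_rep (t : 𝕊))
  have hp : Function.Periodic f 1 := hf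
  conv_rhs => rw [hm]
  exact (periodic_add_int hp _ m).symm

variable {r ℓ : ℕ}

lemma ExpMap.diff (E : ExpMap r ℓ) (hr : 2 ≤ r) : Differentiable ℝ E.toFun :=
  E.contDiff.differentiable (by exact_mod_cast (show r ≠ 0 by omega))

lemma ExpMap.deriv_pos (E : ExpMap r ℓ) (x : ℝ) : 0 < deriv E.toFun x :=
  lt_of_lt_of_le (lt_trans one_pos E.one_lt_lam) (E.lam_le_deriv x)

lemma ExpMap.mono (E : ExpMap r ℓ) (hr : 2 ≤ r) : StrictMono E.toFun :=
  strictMono_of_deriv_pos E.deriv_pos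

lemma ExpMap.one_eq (E : ExpMap r ℓ) : E.toFun 1 = E.toFun 0 + ℓ := by
  simpa using E.degree 0

lemma ExpMap.surj (E : ExpMap r ℓ) (hr : 2 ≤ r) (hl : 2 ≤ ℓ) : Function.Surjective E.toFun := by
  have hc : Continuous E.toFun := (E.contDiff.continuous)
  have hadd : ∀ (n : ℕ) (x : ℝ), E.toFun (x + n) = E.toFun x + n * ℓ := by
    intro n
    induction n with
    | zero => simp
    | succ k ih =>
      intro x
      have : (x : ℝ) + (k+1 : ℕ) = (x + k) + 1 := by push_cast; ring
      rw [this, E.degree, ih]; push_cast; ring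
  refine Continuous.surjective hc ?_ ?_
  · refine tendsto_atTop_atTop_of_monotone (E.mono hr).monotone ?_
    intro b
    obtain ⟨n, hn⟩ := exists_nat_ge (b - E.toFun 0)
    refine ⟨(n : ℝ), ?_⟩
    have h2 := hadd n 0
    have hl1 : (1:ℝ) ≤ ℓ := by exact_mod_cast Nat.one_le_of_lt hl
    have : (n:ℝ) * 1 ≤ (n:ℝ) * ℓ := by
      apply mul_le_mul_of_nonneg_left hl1 (Nat.cast_nonneg n)
    simp only [zero_add] at h2
    rw [h2]; linarith
  · refine tendsto_atBot_atBot_of_monotone (E.mono hr).monotone ?_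
    intro b
    obtain ⟨n, hn⟩ := exists_nat_ge (E.toFun 0 - b)
    refine ⟨-(n : ℝ), ?_⟩
    have h2 := hadd n (-(n:ℝ))
    have hl1 : (1:ℝ) ≤ ℓ := by exact_mod_cast Nat.one_le_of_lt hl
    have : (n:ℝ) * 1 ≤ (n:ℝ) * ℓ := by
      apply mul_le_mul_of_nonneg_left hl1 (Nat.cast_nonneg n)
    simp only [neg_add_cancel] at h2
    linarith


lemma rep_coe_of_mem {u : ℝ} (h : u ∈ Set.Ico (0:ℝ) 1) : rep ((u:ℝ):𝕊) = u := by
  have h' : u ∈ Set.Ico (0:ℝ) (0+1) := by simpa using h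
  exact (AddCircle.coe_eq_coe_iff_of_mem_Ico (AddCircle.equivIco 1 0 ((u:ℝ) : 𝕊)).2 h').mp
    ((AddCircle.equivIco 1 0).symm_apply_apply _)

lemma coe_int_zero (m : ℤ) : ((m : ℝ) : 𝕊) = 0 := by
  rw [AddCircle.coe_eq_zero_iff]; exact ⟨m, by simp⟩

lemma coe_add_int (a : ℝ) (m : ℤ) : ((a + m : ℝ) : 𝕊) = (a : 𝕊) := by
  rw [AddCircle.coe_add, coe_int_zero, add_zero]

lemma ExpMap.map_fiber (E : ExpMap r ℓ) (hr : 2 ≤ r) (hl : 2 ≤ ℓ) (z : 𝕊) :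
    {x : 𝕊 | E.map x = z}.Finite ∧ {x : 𝕊 | E.map x = z}.ncard = ℓ := by
  set F := E.toFun with hF
  have hone : F 1 = F 0 + ℓ := E.one_eq
  have hmono : StrictMono F := E.mono hr
  have hcont : Continuous F := E.contDiff.continuous
  set y := rep z with hy
  have hyz : ((y:ℝ) : 𝕊) = z := coe_rep z
  set M : ℤ := ⌈F 0 - y⌉ with hM
  set T : Set ℝ := (fun m : ℤ => y + (m:ℝ)) '' (Set.Ico M (M+ℓ)) with hT
  set A : Set ℝ := Set.Ico (0:ℝ) 1 ∩ F ⁻¹' T with hA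
  have hTsub : T ⊆ Set.Ico (F 0) (F 1) := by
    rintro t ⟨m, hm, rfl⟩
    obtain ⟨hm1, hm2⟩ := hm
    dsimp only
    constructor
    · have h1 : F 0 - y ≤ (M:ℝ) := Int.le_ceil _
      have h2 : (M:ℝ) ≤ (m:ℝ) := by exact_mod_cast hm1
      linarith
    · have h1 : (M:ℝ) < F 0 - y + 1 := Int.ceil_lt_add_one _
      have h2 : (m:ℝ) ≤ (M:ℝ) + ℓ - 1 := by
        have : m + 1 ≤ M + ℓ := hm2
        have h3 : (m:ℝ) + 1 ≤ (M:ℝ) + ℓ := by exact_mod_cast this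
        linarith
      rw [hone]
      linarith
  have hFA : F '' A = T := by
    apply Set.Subset.antisymm
    · rintro t ⟨u, ⟨_, hu2⟩, rfl⟩; exact hu2
    · intro t ht
      obtain ⟨u, hu, hut⟩ := intermediate_value_Ico (zero_le_one) hcont.continuousOn (hTsub ht)
      exact ⟨u, ⟨hu, by rw [Set.mem_preimage, hut]; exact ht⟩, hut⟩
  have hFinj : Set.InjOn F A := fun u _ v _ h => hmono.injective h
  have hfib : {x : 𝕊 | E.map x = z} = (fun u : ℝ => ((u:ℝ) : 𝕊)) '' A := by
    ext x
    simp only [Set.mem_setOf_eq, Set.mem_image]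
    constructor
    · intro hx
      refine ⟨rep x, ?_, coe_rep x⟩
      have h1 : ((F (rep x) : ℝ) : 𝕊) = ((y : ℝ) : 𝕊) := by
        rw [hyz]; exact hx
      obtain ⟨m, hm⟩ := exists_int_coe_eq h1
      have hFx : F (rep x) = y + ((-m : ℤ) : ℝ) := by push_cast; linarith
      have hrange : F 0 ≤ F (rep x) ∧ F (rep x) < F 1 := by
        have h0 := rep_mem x
        exact ⟨hmono.monotone h0.1, hmono h0.2⟩
      refine ⟨rep_mem x, ?_⟩
      rw [Set.mem_preimage, hFx]
      refine ⟨-m, ?_, rfl⟩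
      have hr1 : F 0 ≤ y + ((-m:ℤ):ℝ) := hFx ▸ hrange.1
      have hr2 : y + ((-m:ℤ):ℝ) < F 0 + ℓ := by
        have h3 := hrange.2; rw [hFx, hone] at h3; linarith
      constructor
      · rw [Int.ceil_le]; push_cast; push_cast at hr1; linarith
      · have h5 : ((-m:ℤ):ℝ) < (M:ℝ) + ℓ := by
          have h1 : F 0 - y ≤ (M:ℝ) := Int.le_ceil _
          linarith
        exact_mod_cast h5
    · rintro ⟨u, ⟨hu1, hu2⟩, rfl⟩
      obtain ⟨m, _, hmu⟩ := hu2
      show ((F (rep ((u:ℝ):𝕊)) : ℝ) : 𝕊) = z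
      rw [rep_coe_of_mem hu1, ← hmu]
      rw [coe_add_int]
      exact hyz
  have hcoeinj : Set.InjOn (fun u : ℝ => ((u:ℝ) : 𝕊)) A := by
    intro u hu v hv h
    have hu' : u ∈ Set.Ico (0:ℝ) (0+1) := by simpa using hu.1
    have hv' : v ∈ Set.Ico (0:ℝ) (0+1) := by simpa using hv.1
    exact (AddCircle.coe_eq_coe_iff_of_mem_Ico hu' hv').mp h
  have hTfin : T.Finite := (Set.finite_Ico M (M+ℓ)).image _
  have hTcard : T.ncard = ℓ := by
    rw [hT, Set.ncard_image_of_injOn (fun a _ b _ h => by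
      have h2 : (a:ℝ) = b := by
        have h3 : y + (a:ℝ) = y + (b:ℝ) := h
        linarith
      exact_mod_cast h2)]
    rw [← Finset.coe_Ico, Set.ncard_coe_finset, Int.card_Ico]
    simp
  have hAfin : A.Finite := Set.Finite.of_finite_image (hFA ▸ hTfin) hFinj
  have hAcard : A.ncard = ℓ := by
    rw [← Set.ncard_image_of_injOn hFinj, hFA, hTcard]
  constructor
  · rw [hfib]; exact hAfin.image _
  · rw [hfib, Set.ncard_image_of_injOn hcoeinj, hAcard]

lemma skew_fiber (E : ExpMap r ℓ) {s : ℕ∞} (τ : CrFun s) (hr : 2 ≤ r) (hl : 2 ≤ ℓ)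
    (z : 𝕊 × 𝕊) :
    {ζ : 𝕊 × 𝕊 | skew E τ ζ = z}.Finite ∧ {ζ : 𝕊 × 𝕊 | skew E τ ζ = z}.ncard = ℓ := by
  have hfib : {ζ : 𝕊 × 𝕊 | skew E τ ζ = z}
      = (fun x : 𝕊 => (x, z.2 - ((τ.toFun (rep x) : ℝ) : 𝕊))) '' {x : 𝕊 | E.map x = z.1} := by
    ext ζ
    simp only [Set.mem_setOf_eq, Set.mem_image, skew, Prod.ext_iff]
    constructor
    · rintro ⟨h1, h2⟩
      exact ⟨ζ.1, h1, rfl, by rw [← h2]; abel⟩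
    · rintro ⟨x, hx, h1, h2⟩
      refine ⟨by rw [← h1]; exact hx, ?_⟩
      rw [← h1, ← h2]; abel
  have hinj : Set.InjOn (fun x : 𝕊 => (x, z.2 - ((τ.toFun (rep x) : ℝ) : 𝕊)))
      {x : 𝕊 | E.map x = z.1} := fun a _ b _ h => congrArg Prod.fst h
  obtain ⟨h1, h2⟩ := E.map_fiber hr hl z.1
  exact ⟨hfib ▸ h1.image _, by rw [hfib, Set.ncard_image_of_injOn hinj, h2]⟩

lemma iter_fiber {α : Type*} (g : α → α) (k : ℕ)
    (h : ∀ z : α, {ζ | g ζ = z}.Finite ∧ {ζ | g ζ = z}.ncard = k) :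
    ∀ (n : ℕ) (z : α), {ζ | g^[n] ζ = z}.Finite ∧ {ζ | g^[n] ζ = z}.ncard = k ^ n := by
  classical
  intro n
  induction n with
  | zero =>
    intro z
    simp only [Function.iterate_zero, id_eq, pow_zero]
    constructor
    · exact (Set.finite_singleton z).subset (by intro a ha; simpa using ha)
    · have : {ζ : α | ζ = z} = {z} := by ext; simp
      rw [this, Set.ncard_singleton]
  | succ n ih =>
    intro z
    have hset : {ζ | g^[n+1] ζ = z} = ⋃ w ∈ {w | g w = z}, {ζ | g^[n] ζ = w} := by
      ext ζ
      simp only [Set.mem_setOf_eq, Set.mem_iUnion, Function.iterate_succ_apply', exists_prop]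
      exact ⟨fun hh => ⟨g^[n] ζ, hh, rfl⟩, fun ⟨w, hw, hw2⟩ => by rw [hw2]; exact hw⟩
    obtain ⟨hTf, hTc⟩ := h z
    have hfin : {ζ | g^[n+1] ζ = z}.Finite := by
      rw [hset]
      exact Set.Finite.biUnion hTf (fun w _ => (ih w).1)
    refine ⟨hfin, ?_⟩
    set T' : Finset α := hTf.toFinset with hT'
    have hcardT' : T'.card = k := by
      rw [hT', ← Set.ncard_eq_toFinset_card _ hTf]; exact hTc
    set S' : Finset α := T'.biUnion (fun w => (ih w).1.toFinset) with hS'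
    have hSS : {ζ | g^[n+1] ζ = z} = (S' : Set α) := by
      rw [hset, hS']
      ext ζ
      simp only [Set.mem_iUnion, Finset.coe_biUnion, Set.mem_setOf_eq, Finset.mem_coe,
        Finset.mem_biUnion, Set.Finite.mem_toFinset, exists_prop, hT']
    rw [hSS, Set.ncard_coe_finset, hS']
    rw [Finset.card_biUnion]
    · have : ∀ w ∈ T', ((ih w).1.toFinset).card = k ^ n := by
        intro w _
        rw [← Set.ncard_eq_toFinset_card _ (ih w).1]; exact (ih w).2
      rw [Finset.sum_congr rfl this, Finset.sum_const, hcardT', smul_eq_mul, pow_succ]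
      ring_nf
    · intro a _ b _ hab
      simp only [Finset.disjoint_left, Set.Finite.mem_toFinset, Set.mem_setOf_eq]
      intro ζ h1 h2
      exact hab (h1 ▸ h2 ▸ rfl)

lemma CrFun.diff {s : ℕ∞} (ψ : CrFun s) (hs : 1 ≤ s) : Differentiable ℝ ψ.toFun :=
  ψ.contDiff.differentiable (by exact_mod_cast (show s ≠ 0 from (lt_of_lt_of_le zero_lt_one hs).ne'))

lemma CrFun.deriv_cont {s : ℕ∞} (ψ : CrFun s) (hs : 2 ≤ s) : Continuous (deriv ψ.toFun) :=
  ψ.contDiff.continuous_deriv (by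
    have h1 : (1 : ℕ∞) ≤ s := le_trans (by norm_num) hs
    exact_mod_cast h1)

lemma periodic_deriv {f : ℝ → ℝ} (hp : ∀ x, f (x+1) = f x) (x : ℝ) :
    deriv f (x+1) = deriv f x := by
  have h1 : deriv (fun y => f (y + 1)) x = deriv f (x + 1) := deriv_comp_add_const f 1 x
  have h2 : (fun y => f (y + 1)) = f := funext hp
  rw [h2] at h1
  exact h1.symm

lemma periodic_abs_le_sSup {f : ℝ → ℝ} (hcont : Continuous f) (hp : ∀ x, f (x+1) = f x) (t : ℝ) :
    |f t| ≤ sSup ((fun x => |f x|) '' Set.Icc (0:ℝ) 1) := by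
  have hfp : ∀ x : ℝ, |f (x+1)| = |f x| := fun x => by rw [hp]
  have habs : |f t| = |f (Int.fract t)| := by
    have h1 : t = Int.fract t + (⌊t⌋ : ℤ) := by rw [Int.fract]; ring
    have h2 := periodic_add_int (f := fun x => |f x|) hfp (Int.fract t) ⌊t⌋
    calc |f t| = |f (Int.fract t + (⌊t⌋:ℤ))| := by rw [← h1]
    _ = |f (Int.fract t)| := h2
  rw [habs]
  apply le_csSup
  · exact (isCompact_Icc.image hcont.abs).bddAbove
  · exact ⟨Int.fract t, ⟨Int.fract_nonneg t, (Int.fract_lt_one t).le⟩, rfl⟩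

/-- Slope function on the circle. -/
def Dphi (φ : CrFun (r:ℕ∞)) (x : 𝕊) : ℝ := deriv φ.toFun (rep x)

lemma tau_deriv (E : ExpMap r ℓ) (τ φ : CrFun (r:ℕ∞)) (c : ℝ) (hr : 2 ≤ r)
    (hc : ∀ x : ℝ, τ.toFun x = φ.toFun (E.toFun x) - φ.toFun x + c) (t : ℝ) :
    deriv τ.toFun t = deriv φ.toFun (E.toFun t) * deriv E.toFun t - deriv φ.toFun t := by
  have hφd : Differentiable ℝ φ.toFun := φ.diff (by exact_mod_cast Nat.one_le_of_lt hr)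
  have hEd : Differentiable ℝ E.toFun := E.diff hr
  have h1 : HasDerivAt (fun x => φ.toFun (E.toFun x))
      (deriv φ.toFun (E.toFun t) * deriv E.toFun t) t :=
    (hφd (E.toFun t)).hasDerivAt.comp t (hEd t).hasDerivAt
  have h2 : HasDerivAt (fun x => φ.toFun (E.toFun x) - φ.toFun x + c)
      (deriv φ.toFun (E.toFun t) * deriv E.toFun t - deriv φ.toFun t) t :=
    (h1.sub (hφd t).hasDerivAt).add_const c
  have h3 : τ.toFun = fun x => φ.toFun (E.toFun x) - φ.toFun x + c := funext hc
  rw [h3]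
  exact h2.deriv

lemma dphi_bound (E : ExpMap r ℓ) (τ φ : CrFun (r:ℕ∞)) (c : ℝ) (hr : 2 ≤ r) (hl : 2 ≤ ℓ)
    (hc : ∀ x : ℝ, τ.toFun x = φ.toFun (E.toFun x) - φ.toFun x + c) :
    ∀ x : 𝕊, |Dphi φ x| ≤ τ.dsup / (E.lam - 1) := by
  have hφc : Continuous (deriv φ.toFun) := φ.deriv_cont (by exact_mod_cast hr)
  have hτc : Continuous (deriv τ.toFun) := τ.deriv_cont (by exact_mod_cast hr)
  have hφp : ∀ x : ℝ, deriv φ.toFun (x+1) = deriv φ.toFun x := periodic_deriv φ.periodic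
  have hτp : ∀ x : ℝ, deriv τ.toFun (x+1) = deriv τ.toFun x := periodic_deriv τ.periodic
  set Mφ := sSup ((fun x => |deriv φ.toFun x|) '' Set.Icc (0:ℝ) 1) with hMφ
  set T := τ.dsup with hT
  have hMb : ∀ t : ℝ, |deriv φ.toFun t| ≤ Mφ := periodic_abs_le_sSup hφc hφp
  have hTb : ∀ t : ℝ, |deriv τ.toFun t| ≤ T := periodic_abs_le_sSup hτc hτp
  have hlam : 1 < E.lam := E.one_lt_lam
  have hlam0 : 0 < E.lam - 1 := by linarith
  have hstep : ∀ s : ℝ, |deriv φ.toFun s| ≤ (T + Mφ) / E.lam := by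
    intro s
    obtain ⟨x, rfl⟩ := E.surj hr hl s
    have heq := tau_deriv E τ φ c hr hc x
    have hEx : E.lam ≤ deriv E.toFun x := E.lam_le_deriv x
    have hEx0 : 0 < deriv E.toFun x := E.deriv_pos x
    have h2 : |deriv φ.toFun (E.toFun x) * deriv E.toFun x| ≤ T + Mφ := by
      have h4 : deriv φ.toFun (E.toFun x) * deriv E.toFun x
          = deriv τ.toFun x + deriv φ.toFun x := by rw [heq]; ring
      rw [h4]
      exact le_trans (abs_add_le _ _) (add_le_add (hTb x) (hMb x))
    have h3 : |deriv φ.toFun (E.toFun x)| * E.lam ≤ T + Mφ := by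
      calc |deriv φ.toFun (E.toFun x)| * E.lam
          ≤ |deriv φ.toFun (E.toFun x)| * deriv E.toFun x :=
            mul_le_mul_of_nonneg_left hEx (abs_nonneg _)
      _ = |deriv φ.toFun (E.toFun x) * deriv E.toFun x| := by
            rw [abs_mul, abs_of_pos hEx0]
      _ ≤ T + Mφ := h2
    rw [le_div_iff₀ (by linarith : (0:ℝ) < E.lam)]
    exact h3
  have hMle : Mφ ≤ (T + Mφ) / E.lam := by
    apply csSup_le
    · exact ⟨|deriv φ.toFun 0|, 0, by norm_num, rfl⟩
    · rintro b ⟨t, _, rfl⟩; exact hstep t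
  have hM0 : 0 ≤ Mφ := le_trans (abs_nonneg _) (hMb 0)
  have hMT : Mφ ≤ T / (E.lam - 1) := by
    rw [le_div_iff₀ (by linarith : (0:ℝ) < E.lam)] at hMle
    rw [le_div_iff₀ hlam0]
    nlinarith
  intro x
  exact le_trans (hMb (rep x)) hMT

lemma key_id (E : ExpMap r ℓ) (τ φ : CrFun (r:ℕ∞)) (c : ℝ) (hr : 2 ≤ r)
    (hc : ∀ x : ℝ, τ.toFun x = φ.toFun (E.toFun x) - φ.toFun x + c) (x : 𝕊) :
    deriv τ.toFun (rep x) + Dphi φ x = Dphi φ (E.map x) * deriv E.toFun (rep x) := by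
  have hφp : ∀ t : ℝ, deriv φ.toFun (t+1) = deriv φ.toFun t := periodic_deriv φ.periodic
  have h1 : Dphi φ (E.map x) = deriv φ.toFun (E.toFun (rep x)) := by
    unfold Dphi ExpMap.map
    exact periodic_rep_coe hφp _
  rw [h1, tau_deriv E τ φ c hr hc (rep x)]
  unfold Dphi
  ring

lemma jac1_mulVec (E : ExpMap r ℓ) (τ φ : CrFun (r:ℕ∞)) (c : ℝ) (hr : 2 ≤ r)
    (hc : ∀ x : ℝ, τ.toFun x = φ.toFun (E.toFun x) - φ.toFun x + c) (x : 𝕊) :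
    (Jac1 E τ x).mulVec ![1, Dphi φ x]
      = deriv E.toFun (rep x) • ![1, Dphi φ (E.map x)] := by
  funext i
  fin_cases i
  · simp [Jac1, Matrix.mulVec, dotProduct, Fin.sum_univ_two]
  · simp [Jac1, Matrix.mulVec, dotProduct, Fin.sum_univ_two]
    have h1 := key_id E τ φ c hr hc x
    unfold Dphi at h1 ⊢
    linarith [h1]

lemma jacn_mulVec (E : ExpMap r ℓ) (τ φ : CrFun (r:ℕ∞)) (c : ℝ) (hr : 2 ≤ r)
    (hc : ∀ x : ℝ, τ.toFun x = φ.toFun (E.toFun x) - φ.toFun x + c) (n : ℕ) (ζ : 𝕊 × 𝕊) :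
    ∃ P : ℝ, 0 < P ∧ (Jacn E τ n ζ).mulVec ![1, Dphi φ ζ.1]
      = P • ![1, Dphi φ (((skew E τ)^[n] ζ).1)] := by
  induction n generalizing ζ with
  | zero =>
    refine ⟨1, one_pos, ?_⟩
    simp [Jacn, Matrix.one_mulVec]
  | succ n ih =>
    obtain ⟨P, hP, hPe⟩ := ih (skew E τ ζ)
    refine ⟨P * deriv E.toFun (rep ζ.1), mul_pos hP (E.deriv_pos _), ?_⟩
    show (Jacn E τ n (skew E τ ζ) * Jac1 E τ ζ.1).mulVec ![1, Dphi φ ζ.1] = _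
    rw [← Matrix.mulVec_mulVec]
    have hsk : (skew E τ ζ).1 = E.map ζ.1 := rfl
    rw [jac1_mulVec E τ φ c hr hc, Matrix.mulVec_smul, ← hsk, hPe]
    rw [smul_smul, ← Function.iterate_succ_apply, mul_comm]

lemma dsup_nonneg (τ : CrFun (r:ℕ∞)) (hr : 2 ≤ r) : 0 ≤ τ.dsup := by
  have hτc : Continuous (deriv τ.toFun) := τ.deriv_cont (by exact_mod_cast hr)
  have hτp : ∀ x : ℝ, deriv τ.toFun (x+1) = deriv τ.toFun x := periodic_deriv τ.periodic
  exact le_trans (abs_nonneg _) (periodic_abs_le_sSup hτc hτp 0)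

lemma nQ_eq (E : ExpMap r ℓ) (τ φ : CrFun (r:ℕ∞)) (c : ℝ) (hr : 2 ≤ r) (hl : 2 ≤ ℓ)
    (hc : ∀ x : ℝ, τ.toFun x = φ.toFun (E.toFun x) - φ.toFun x + c) (n : ℕ) :
    nQ E τ (τ.dsup + 1) n = (ℓ:ℝ)^n := by
  set R := τ.dsup + 1 with hR
  have hlam0 : 0 < E.lam - 1 := by linarith [E.one_lt_lam]
  have hT0 : 0 ≤ τ.dsup := dsup_nonneg τ hr
  have hθ0 : 0 < R / (E.lam - 1) := div_pos (by linarith) hlam0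
  have hDb : ∀ x : 𝕊, |Dphi φ x| ≤ R / (E.lam - 1) := by
    intro x
    refine le_trans (dphi_bound E τ φ c hr hl hc x) ?_
    gcongr
    linarith
  have hfib := iter_fiber (skew E τ) ℓ (fun z => skew_fiber E τ hr hl z) n
  -- the distinguished point and unit vector
  set z : 𝕊 × 𝕊 := (0, 0) with hz
  set d : ℝ := Dphi φ z.1 with hd
  set sq : ℝ := Real.sqrt (1 + d^2) with hsq
  have hsqpos : 0 < sq := Real.sqrt_pos.mpr (by positivity)
  have hsq2 : sq^2 = 1 + d^2 := Real.sq_sqrt (by positivity)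
  set v : Fin 2 → ℝ := sq⁻¹ • ![1, d] with hv
  have hv0 : v 0 = sq⁻¹ := by simp [hv]
  have hv1 : v 1 = sq⁻¹ * d := by simp [hv]
  have hunit : IsUnitVec v := by
    unfold IsUnitVec
    rw [hv0, hv1]
    have : sq ≠ 0 := ne_of_gt hsqpos
    field_simp
    linarith [hsq2]
  -- full fiber is the count set for (z, v)
  have hfull : {ζ : 𝕊 × 𝕊 | (skew E τ)^[n] ζ = z ∧
      v ∈ (Jacn E τ n ζ).mulVec '' E.cone R} = {ζ : 𝕊 × 𝕊 | (skew E τ)^[n] ζ = z} := by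
    apply Set.Subset.antisymm
    · intro ζ hζ; exact hζ.1
    · intro ζ hζ
      refine ⟨hζ, ?_⟩
      obtain ⟨P, hP, hPe⟩ := jacn_mulVec E τ φ c hr hc n ζ
      refine ⟨(sq⁻¹ * P⁻¹) • ![1, Dphi φ ζ.1], ?_, ?_⟩
      · show |((sq⁻¹ * P⁻¹) • ![1, Dphi φ ζ.1]) 1| ≤ R / (E.lam - 1) * |((sq⁻¹ * P⁻¹) • ![1, Dphi φ ζ.1]) 0|
        have e0 : ((sq⁻¹ * P⁻¹) • ![1, Dphi φ ζ.1]) 0 = sq⁻¹ * P⁻¹ := by simp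
        have e1 : ((sq⁻¹ * P⁻¹) • ![1, Dphi φ ζ.1]) 1 = (sq⁻¹ * P⁻¹) * Dphi φ ζ.1 := by simp
        rw [e0, e1, abs_mul]
        calc |sq⁻¹ * P⁻¹| * |Dphi φ ζ.1| ≤ |sq⁻¹ * P⁻¹| * (R / (E.lam - 1)) :=
              mul_le_mul_of_nonneg_left (hDb ζ.1) (abs_nonneg _)
        _ = R / (E.lam - 1) * |sq⁻¹ * P⁻¹| := mul_comm _ _
      · rw [Matrix.mulVec_smul, hPe, smul_smul, mul_assoc, inv_mul_cancel₀ (ne_of_gt hP),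
          mul_one, hζ]
  have hmem : ((ℓ:ℝ)^n : ℝ) ∈ {cc : ℝ | ∃ (z : 𝕊 × 𝕊) (v : Fin 2 → ℝ), IsUnitVec v ∧
      cc = ({ζ : 𝕊 × 𝕊 | (skew E τ)^[n] ζ = z ∧
        v ∈ (Jacn E τ n ζ).mulVec '' E.cone R}.ncard : ℝ)} := by
    refine ⟨z, v, hunit, ?_⟩
    rw [hfull, (hfib z).2]
    push_cast
    ring
  have hub : ∀ b ∈ {cc : ℝ | ∃ (z : 𝕊 × 𝕊) (v : Fin 2 → ℝ), IsUnitVec v ∧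
      cc = ({ζ : 𝕊 × 𝕊 | (skew E τ)^[n] ζ = z ∧
        v ∈ (Jacn E τ n ζ).mulVec '' E.cone R}.ncard : ℝ)}, b ≤ (ℓ:ℝ)^n := by
    rintro b ⟨z', v', _, rfl⟩
    have hsub : {ζ : 𝕊 × 𝕊 | (skew E τ)^[n] ζ = z' ∧
        v' ∈ (Jacn E τ n ζ).mulVec '' E.cone R} ⊆ {ζ : 𝕊 × 𝕊 | (skew E τ)^[n] ζ = z'} :=
      fun ζ hζ => hζ.1
    have hle := Set.ncard_le_ncard hsub (hfib z').1
    rw [(hfib z').2] at hle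
    calc ({ζ : 𝕊 × 𝕊 | (skew E τ)^[n] ζ = z' ∧
        v' ∈ (Jacn E τ n ζ).mulVec '' E.cone R}.ncard : ℝ) ≤ ((ℓ^n : ℕ) : ℝ) := by
          exact_mod_cast hle
    _ = (ℓ:ℝ)^n := by push_cast; ring
  unfold nQ
  apply le_antisymm
  · exact csSup_le ⟨_, hmem⟩ hub
  · exact le_csSup ⟨(ℓ:ℝ)^n, hub⟩ hmem

/-- If `τ` is cohomologous to a constant, i.e.
`τ(x) = φ(E(x)) - φ(x) + c` for some `φ ∈ C^r(𝕊¹)` and `c ∈ ℝ`, then `𝔫(τ) = ℓ`. -/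
theorem stmt15 (r ℓ : ℕ) (hr : 2 ≤ r) (hl : 2 ≤ ℓ) (E : ExpMap r ℓ) (τ : CrFun r)
    (hcoh : ∃ (φ : CrFun r) (c : ℝ), ∀ x : ℝ, τ.toFun x = φ.toFun (E.toFun x) - φ.toFun x + c) :
    nlim E τ = ℓ := by
  obtain ⟨φ, c, hc⟩ := hcoh
  have hq : ∀ n : ℕ, nQ E τ (τ.dsup + 1) n = (ℓ:ℝ)^n := nQ_eq E τ φ c hr hl hc
  have hev : (fun n : ℕ => nQ E τ (τ.dsup + 1) n ^ ((n:ℝ)⁻¹)) =ᶠ[atTop] (fun _ => (ℓ:ℝ)) := by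
    filter_upwards [eventually_ge_atTop 1] with n hn1
    rw [hq n, ← Real.rpow_natCast (ℓ:ℝ) n, ← Real.rpow_mul (Nat.cast_nonneg ℓ),
      mul_inv_cancel₀ (Nat.cast_ne_zero.mpr (by omega) : (n:ℝ) ≠ 0), Real.rpow_one]
  have ht : Filter.Tendsto (fun n : ℕ => nQ E τ (τ.dsup + 1) n ^ ((n:ℝ)⁻¹)) atTop (𝓝 (ℓ:ℝ)) :=
    Filter.Tendsto.congr' hev.symm tendsto_const_nhds
  exact ht.limUnder_eq
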